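/- In any optimal WSPT schedule for an instance of P2||∑w_jC_j, for every efficiency index i the load difference δ_i between the two machines on jobs of efficiency at least e_(i) satisfies |δ_i| ≤ √(w_max)·p_max². -/

import Mathlib

/-- Total processing time of jobs with efficiency at least `t` assigned to machine `ℓ`
by the assignment `σ` (in a WSPT schedule the job order on each machine is by
non-increasing efficiency, so the assignment determines the schedule). -/
def mLoad {n m : ℕ} (p w : Fin n → ℕ) (σ : Fin n → Fin m) (t : ℚ) (ℓ : Fin m) : ℚ :=
  ∑ j ∈ Finset.univ.filter (fun j => t ≤ (w j : ℚ) / (p j : ℚ) ∧ σ j = ℓ), (p j : ℚ)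

/-- Total processing time of all jobs with efficiency at least `t`. -/
def totLoad {n : ℕ} (p w : Fin n → ℕ) (t : ℚ) : ℚ :=
  ∑ j ∈ Finset.univ.filter (fun j => t ≤ (w j : ℚ) / (p j : ℚ)), (p j : ℚ)

/-- The deviation `Δ_{i,ℓ} = μ_i − P(J₁^ℓ ∪ ⋯ ∪ J_i^ℓ)` at efficiency threshold `t`. -/
def dev {n m : ℕ} (p w : Fin n → ℕ) (σ : Fin n → Fin m) (t : ℚ) (ℓ : Fin m) : ℚ :=
  totLoad p w t / m - mLoad p w σ t ℓ

/-- Goemans–Williamson expression for the total weighted completion time of the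
WSPT schedule determined by the assignment `σ`, where `e 0 > e 1 > ⋯ > e (k-1)` are
the distinct efficiencies and `e k = 0`. -/
def fObj {n m : ℕ} (p w : Fin n → ℕ) (e : ℕ → ℚ) (k : ℕ) (σ : Fin n → Fin m) : ℚ :=
  (∑ i ∈ Finset.range k, (e i - e (i + 1)) * ∑ ℓ : Fin m, (mLoad p w σ (e i) ℓ) ^ 2
    + ∑ j : Fin n, (w j : ℚ) * (p j : ℚ)) / 2

/-- The function `g(σ) = ∑_i (e_(i) − e_(i+1)) ∑_ℓ Δ_{i,ℓ}²`. -/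
def gObj {n m : ℕ} (p w : Fin n → ℕ) (e : ℕ → ℚ) (k : ℕ) (σ : Fin n → Fin m) : ℚ :=
  ∑ i ∈ Finset.range k, (e i - e (i + 1)) * ∑ ℓ : Fin m, (dev p w σ (e i) ℓ) ^ 2

/-- Sign of a machine index: `+1` for machine `0`, `-1` for machine `1`. -/
def sgn2 (ℓ : Fin 2) : ℚ := if ℓ = 0 then 1 else -1

lemma mLoad_eq_if {n : ℕ} (p w : Fin n → ℕ) (τ : Fin n → Fin 2) (t : ℚ) (ℓ : Fin 2) :
    mLoad p w τ t ℓ = ∑ j ∈ Finset.univ.filter (fun j => t ≤ (w j : ℚ) / (p j : ℚ)),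
      (if τ j = ℓ then (p j : ℚ) else 0) := by
  rw [mLoad, ← Finset.sum_filter, Finset.filter_filter]

lemma mLoad_sub {n : ℕ} (p w : Fin n → ℕ) (τ : Fin n → Fin 2) (t : ℚ) :
    mLoad p w τ t 0 - mLoad p w τ t 1
      = ∑ j ∈ Finset.univ.filter (fun j => t ≤ (w j : ℚ) / (p j : ℚ)), sgn2 (τ j) * (p j : ℚ) := by
  rw [mLoad_eq_if, mLoad_eq_if, ← Finset.sum_sub_distrib]
  refine Finset.sum_congr rfl fun j _ => ?_
  have h2 : ∀ x : Fin 2, x = 0 ∨ x = 1 := by decide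
  rcases h2 (τ j) with h | h <;> simp [h, sgn2]

lemma totLoad_eq {n : ℕ} (p w : Fin n → ℕ) (τ : Fin n → Fin 2) (t : ℚ) :
    totLoad p w t = mLoad p w τ t 0 + mLoad p w τ t 1 := by
  rw [mLoad_eq_if, mLoad_eq_if, ← Finset.sum_add_distrib, totLoad]
  refine Finset.sum_congr rfl fun j _ => ?_
  have h2 : ∀ x : Fin 2, x = 0 ∨ x = 1 := by decide
  rcases h2 (τ j) with h | h <;> simp [h]

lemma sq_split {n : ℕ} (p w : Fin n → ℕ) (τ : Fin n → Fin 2) (t : ℚ) :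
    ∑ ℓ : Fin 2, (mLoad p w τ t ℓ) ^ 2
      = (totLoad p w t) ^ 2 / 2 + ∑ ℓ : Fin 2, (dev p w τ t ℓ) ^ 2 := by
  have hT := totLoad_eq p w τ t
  simp only [Fin.sum_univ_two, dev, hT, Nat.cast_ofNat]
  ring

lemma devsum_eq {n : ℕ} (p w : Fin n → ℕ) (τ : Fin n → Fin 2) (t : ℚ) :
    ∑ ℓ : Fin 2, (dev p w τ t ℓ) ^ 2
      = (mLoad p w τ t 0 - mLoad p w τ t 1) ^ 2 / 2 := by
  have hT := totLoad_eq p w τ t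
  simp only [Fin.sum_univ_two, dev, hT, Nat.cast_ofNat]
  ring

lemma fObj_eq {n : ℕ} (p w : Fin n → ℕ) (e : ℕ → ℚ) (k : ℕ) (τ : Fin n → Fin 2) :
    fObj p w e k τ
      = (∑ i ∈ Finset.range k, (e i - e (i + 1)) * ((totLoad p w (e i)) ^ 2 / 2)
          + ∑ j : Fin n, (w j : ℚ) * (p j : ℚ)) / 2 + gObj p w e k τ / 2 := by
  unfold fObj gObj
  simp only [sq_split, mul_add]
  rw [Finset.sum_add_distrib]
  ring

lemma exists_balanced {n : ℕ} (p w : Fin n → ℕ) (pm : ℚ) (hpm : 0 ≤ pm)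
    (hp : ∀ j, 0 < (p j : ℚ)) (hple : ∀ j, (p j : ℚ) ≤ pm) (S : Finset (Fin n)) :
    ∃ τ : Fin n → Fin 2, ∀ t : ℚ,
      |∑ j ∈ S.filter (fun j => t ≤ (w j : ℚ) / (p j : ℚ)), sgn2 (τ j) * (p j : ℚ)| ≤ pm := by
  induction S using Finset.strongInduction with
  | _ S ih =>
    rcases S.eq_empty_or_nonempty with rfl | hS
    · exact ⟨fun _ => 0, by simpa using hpm⟩
    · obtain ⟨j₀, hj₀S, hmin⟩ := S.exists_min_image (fun j => (w j : ℚ) / (p j : ℚ)) hS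
      obtain ⟨τ', hτ'⟩ := ih (S.erase j₀) (Finset.erase_ssubset hj₀S)
      set e₀ := (w j₀ : ℚ) / (p j₀ : ℚ) with he₀
      set D := ∑ j ∈ S.erase j₀, sgn2 (τ' j) * (p j : ℚ) with hD
      have hfull : (S.erase j₀).filter (fun j => e₀ ≤ (w j : ℚ) / (p j : ℚ)) = S.erase j₀ := by
        apply Finset.filter_true_of_mem
        intro j hj; exact hmin j (Finset.mem_of_mem_erase hj)
      have hDle : |D| ≤ pm := by have := hτ' e₀; rwa [hfull] at this
      set τ : Fin n → Fin 2 := fun x => if x = j₀ then (if 0 ≤ D then 1 else 0) else τ' x with hτdef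
      refine ⟨τ, fun t => ?_⟩
      by_cases ht : t ≤ e₀
      · have hsplit : S.filter (fun j => t ≤ (w j : ℚ) / (p j : ℚ)) = S := by
          apply Finset.filter_true_of_mem
          intro j hj; exact le_trans ht (hmin j hj)
        rw [hsplit, ← Finset.add_sum_erase _ _ hj₀S]
        have hrest : ∑ j ∈ S.erase j₀, sgn2 (τ j) * (p j : ℚ) = D := by
          refine Finset.sum_congr rfl fun j hj => ?_
          rw [hτdef]; simp [(Finset.mem_erase.mp hj).1]
        rw [hrest]
        have hτj₀ : τ j₀ = if 0 ≤ D then 1 else 0 := by simp [hτdef]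
        rcases abs_le.mp hDle with ⟨hD1, hD2⟩
        have hp0 := hp j₀
        have hple0 := hple j₀
        by_cases hDsign : 0 ≤ D
        · rw [hτj₀, if_pos hDsign]
          have : sgn2 1 = -1 := by simp [sgn2]
          rw [this, abs_le]; constructor <;> nlinarith
        · rw [hτj₀, if_neg hDsign]
          have : sgn2 0 = 1 := by simp [sgn2]
          rw [this, abs_le]; constructor <;> nlinarith
      · have hsplit : S.filter (fun j => t ≤ (w j : ℚ) / (p j : ℚ))
            = (S.erase j₀).filter (fun j => t ≤ (w j : ℚ) / (p j : ℚ)) := by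
          ext j
          simp only [Finset.mem_filter, Finset.mem_erase]
          constructor
          · rintro ⟨hjS, hjt⟩
            refine ⟨⟨?_, hjS⟩, hjt⟩
            rintro rfl; exact ht hjt
          · rintro ⟨⟨_, hjS⟩, hjt⟩; exact ⟨hjS, hjt⟩
        rw [hsplit]
        have hrest : ∑ j ∈ (S.erase j₀).filter (fun j => t ≤ (w j : ℚ) / (p j : ℚ)),
            sgn2 (τ j) * (p j : ℚ)
            = ∑ j ∈ (S.erase j₀).filter (fun j => t ≤ (w j : ℚ) / (p j : ℚ)),
            sgn2 (τ' j) * (p j : ℚ) := by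
          refine Finset.sum_congr rfl fun j hj => ?_
          have := (Finset.mem_erase.mp (Finset.mem_of_mem_filter _ hj)).1
          rw [hτdef]; simp [this]
        rw [hrest]; exact hτ' t

lemma eff_gap {k n pmax : ℕ} (p w : Fin n → ℕ)
    (hp : ∀ j, 0 < p j) (hpmax : ∀ j, p j ≤ pmax) (hw : ∀ j, 0 < w j)
    (e : ℕ → ℚ) (hdec : ∀ i < k, e (i + 1) < e i) (hek : e k = 0)
    (hrng : ∀ i < k, ∃ j, (w j : ℚ) / (p j : ℚ) = e i)
    (i : ℕ) (hi : i < k) : 1 / (pmax : ℚ) ^ 2 ≤ e i - e (i + 1) := by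
  obtain ⟨a, ha⟩ := hrng i hi
  have hpa : (0:ℚ) < (p a : ℚ) := by exact_mod_cast hp a
  have hwa : (1:ℚ) ≤ (w a : ℚ) := by exact_mod_cast hw a
  have hpam : (p a : ℚ) ≤ (pmax : ℚ) := by exact_mod_cast hpmax a
  have hpm1 : (1:ℚ) ≤ (pmax : ℚ) := by
    have := hp a; have := hpmax a
    exact_mod_cast by omega
  rcases Nat.lt_or_ge (i+1) k with hik | hik
  · obtain ⟨b, hb⟩ := hrng (i+1) hik
    have hpb : (0:ℚ) < (p b : ℚ) := by exact_mod_cast hp b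
    have hpbm : (p b : ℚ) ≤ (pmax : ℚ) := by exact_mod_cast hpmax b
    have hlt : (w b : ℚ) * (p a : ℚ) < (w a : ℚ) * (p b : ℚ) := by
      have := hdec i hi
      rw [← ha, ← hb] at this
      exact (div_lt_div_iff₀ hpb hpa).mp this
    have hnat : w b * p a < w a * p b := by exact_mod_cast hlt
    have h1le : (1:ℚ) ≤ (w a : ℚ) * (p b : ℚ) - (w b : ℚ) * (p a : ℚ) := by
      have : w b * p a + 1 ≤ w a * p b := hnat
      have := (Nat.cast_le (α := ℚ)).mpr this
      push_cast at this; linarith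
    have heq : e i - e (i+1)
        = ((w a : ℚ) * (p b : ℚ) - (w b : ℚ) * (p a : ℚ)) / ((p a : ℚ) * (p b : ℚ)) := by
      rw [← ha, ← hb]; field_simp
    rw [heq]
    apply div_le_div₀ (by linarith) h1le (by positivity)
    calc (p a : ℚ) * (p b : ℚ) ≤ (pmax : ℚ) * (pmax : ℚ) := by
          apply mul_le_mul hpam hpbm (le_of_lt hpb) (by linarith)
      _ = (pmax : ℚ) ^ 2 := by ring
  · have hik' : i + 1 = k := by omega
    rw [hik', hek, sub_zero, ← ha]
    apply div_le_div₀ (by linarith) hwa hpa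
    nlinarith

theorem stmt_17 (k n pmax wmax : ℕ) (hk : 0 < k)
    (p w : Fin n → ℕ)
    (hp : ∀ j, 0 < p j) (hpmax : ∀ j, p j ≤ pmax)
    (hw : ∀ j, 0 < w j) (hwmax : ∀ j, w j ≤ wmax)
    (e : ℕ → ℚ) (hdec : ∀ i < k, e (i + 1) < e i) (hek : e k = 0)
    (hcov : ∀ j, ∃ i < k, (w j : ℚ) / (p j : ℚ) = e i)
    (hrng : ∀ i < k, ∃ j, (w j : ℚ) / (p j : ℚ) = e i)
    (σ : Fin n → Fin 2)
    (hopt : ∀ τ : Fin n → Fin 2, fObj p w e k σ ≤ fObj p w e k τ) :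
    ∀ i < k,
      |((mLoad p w σ (e i) 0 - mLoad p w σ (e i) 1 : ℚ) : ℝ)|
        ≤ Real.sqrt (wmax : ℝ) * (pmax : ℝ) ^ 2 := by
  intro i hi
  -- basic positivity facts
  obtain ⟨j₀, hj₀⟩ := hrng 0 hk
  have hpm1 : (1:ℚ) ≤ (pmax : ℚ) := by
    have := hp j₀; have := hpmax j₀
    exact_mod_cast by omega
  have hpmQ : (0:ℚ) < (pmax : ℚ) := by linarith
  have hwm0 : (0:ℚ) ≤ (wmax : ℚ) := by positivity
  -- the balanced assignment
  obtain ⟨τ, hbal⟩ := exists_balanced p w (pmax : ℚ) (le_of_lt hpmQ)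
    (fun j => by exact_mod_cast hp j) (fun j => by exact_mod_cast hpmax j) Finset.univ
  -- optimality transfers to gObj
  have hg : gObj p w e k σ ≤ gObj p w e k τ := by
    have h := hopt τ
    rw [fObj_eq, fObj_eq] at h
    linarith
  -- upper bound on gObj τ
  have he0 : e 0 ≤ (wmax : ℚ) := by
    obtain ⟨a, ha⟩ := hrng 0 hk
    rw [← ha]
    have h1 : (1:ℚ) ≤ (p a : ℚ) := by exact_mod_cast hp a
    have h2 : (w a : ℚ) ≤ (wmax : ℚ) := by exact_mod_cast hwmax a
    calc (w a : ℚ) / (p a : ℚ) ≤ (w a : ℚ) / 1 := by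
          apply div_le_div_of_nonneg_left (by positivity) (by norm_num) h1
      _ = (w a : ℚ) := by norm_num
      _ ≤ (wmax : ℚ) := h2
  have hgτ : gObj p w e k τ ≤ (wmax : ℚ) * ((pmax : ℚ) ^ 2 / 2) := by
    have hstep : gObj p w e k τ
        ≤ ∑ i ∈ Finset.range k, (e i - e (i + 1)) * ((pmax : ℚ) ^ 2 / 2) := by
      unfold gObj
      refine Finset.sum_le_sum fun i' hi' => ?_
      have hi'k : i' < k := Finset.mem_range.mp hi'
      have hpos : 0 ≤ e i' - e (i' + 1) := le_of_lt (sub_pos.mpr (hdec i' hi'k))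
      apply mul_le_mul_of_nonneg_left _ hpos
      rw [devsum_eq]
      have hb := hbal (e i')
      rw [← mLoad_sub] at hb
      rcases abs_le.mp hb with ⟨hb1, hb2⟩
      have : (mLoad p w τ (e i') 0 - mLoad p w τ (e i') 1) ^ 2 ≤ (pmax : ℚ) ^ 2 :=
        sq_le_sq' hb1 hb2
      linarith
    calc gObj p w e k τ ≤ _ := hstep
      _ = (e 0 - e k) * ((pmax : ℚ) ^ 2 / 2) := by
          rw [← Finset.sum_mul, Finset.sum_range_sub']
      _ ≤ (wmax : ℚ) * ((pmax : ℚ) ^ 2 / 2) := by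
          rw [hek, sub_zero]
          apply mul_le_mul_of_nonneg_right he0 (by positivity)
  -- lower bound on gObj σ
  set δ : ℚ := mLoad p w σ (e i) 0 - mLoad p w σ (e i) 1 with hδ
  have hlow : (e i - e (i + 1)) * (δ ^ 2 / 2) ≤ gObj p w e k σ := by
    unfold gObj
    have hterm : (e i - e (i + 1)) * (δ ^ 2 / 2)
        = (e i - e (i + 1)) * ∑ ℓ : Fin 2, (dev p w σ (e i) ℓ) ^ 2 := by
      rw [devsum_eq]
    rw [hterm]
    apply Finset.single_le_sum (f := fun i' => (e i' - e (i' + 1)) * ∑ ℓ : Fin 2, (dev p w σ (e i') ℓ) ^ 2)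
      (fun i' hi' => ?_) (Finset.mem_range.mpr hi)
    have hpos : 0 ≤ e i' - e (i' + 1) := le_of_lt (sub_pos.mpr (hdec i' (Finset.mem_range.mp hi')))
    exact mul_nonneg hpos (Finset.sum_nonneg fun _ _ => sq_nonneg _)
  have hgap := eff_gap p w hp hpmax hw e hdec hek hrng i hi
  have h1 : 1 / (pmax : ℚ) ^ 2 * (δ ^ 2 / 2) ≤ (e i - e (i + 1)) * (δ ^ 2 / 2) :=
    mul_le_mul_of_nonneg_right hgap (by positivity)
  have hchain : 1 / (pmax : ℚ) ^ 2 * (δ ^ 2 / 2) ≤ (wmax : ℚ) * ((pmax : ℚ) ^ 2 / 2) := by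
    linarith
  have hfinal : δ ^ 2 ≤ (wmax : ℚ) * (pmax : ℚ) ^ 4 := by
    have hPne : ((pmax : ℚ) ^ 2) ≠ 0 := by positivity
    have h2 : δ ^ 2 = (1 / (pmax : ℚ) ^ 2 * (δ ^ 2 / 2)) * (2 * (pmax : ℚ) ^ 2) := by
      field_simp
    calc δ ^ 2 = _ := h2
      _ ≤ ((wmax : ℚ) * ((pmax : ℚ) ^ 2 / 2)) * (2 * (pmax : ℚ) ^ 2) :=
          mul_le_mul_of_nonneg_right hchain (by positivity)
      _ = (wmax : ℚ) * (pmax : ℚ) ^ 4 := by ring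
  -- pass to ℝ
  have hR : ((δ : ℚ) : ℝ) ^ 2 ≤ (wmax : ℝ) * (pmax : ℝ) ^ 4 := by exact_mod_cast hfinal
  calc |((δ : ℚ) : ℝ)| = Real.sqrt (((δ : ℚ) : ℝ) ^ 2) := (Real.sqrt_sq_eq_abs _).symm
    _ ≤ Real.sqrt ((wmax : ℝ) * (pmax : ℝ) ^ 4) := Real.sqrt_le_sqrt hR
    _ = Real.sqrt (wmax : ℝ) * (pmax : ℝ) ^ 2 := by
        rw [show (wmax : ℝ) * (pmax : ℝ) ^ 4 = (wmax : ℝ) * ((pmax : ℝ) ^ 2) ^ 2 by ring,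
          Real.sqrt_mul (by positivity), Real.sqrt_sq (by positivity)]
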